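/- Let $g : [0,1] \to \mathbb{R}$ be twice continuously differentiable with $g(0) > 0$, $g(1) < 0$, and suppose $g'$ is convex on $[0,1]$. Then $g$ has a unique zero in $(0,1)$. -/

import Mathlib

theorem stmt_10 (g : ℝ → ℝ) (hg : ContDiff ℝ 2 g)
    (hconv : ConvexOn ℝ (Set.Icc (0:ℝ) 1) (deriv g))
    (h0 : 0 < g 0) (h1 : g 1 < 0) :
    ∃! β : ℝ, β ∈ Set.Ioo (0:ℝ) 1 ∧ g β = 0 := by
  have hgc : Continuous g := hg.continuous
  have hgd : Differentiable ℝ g := hg.differentiable (by norm_num)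
  -- existence
  obtain ⟨β, hβmem, hβ0⟩ : (0:ℝ) ∈ g '' Set.Ioo 0 1 :=
    intermediate_value_Ioo' (by norm_num) hgc.continuousOn ⟨h1, h0⟩
  -- no two distinct zeros
  have key : ∀ a b : ℝ, a ∈ Set.Ioo (0:ℝ) 1 → b ∈ Set.Ioo (0:ℝ) 1 → g a = 0 → g b = 0 →
      a < b → False := by
    intro a b ha hb hga hgb hab
    obtain ⟨c₁, hc₁, hd₁⟩ := exists_deriv_eq_slope g ha.1 hgc.continuousOn
      (hgd.differentiableOn)
    obtain ⟨c₂, hc₂, hd₂⟩ := exists_deriv_eq_slope g hab hgc.continuousOn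
      (hgd.differentiableOn)
    obtain ⟨c₃, hc₃, hd₃⟩ := exists_deriv_eq_slope g hb.2 hgc.continuousOn
      (hgd.differentiableOn)
    rw [hga] at hd₁ hd₂
    rw [hgb] at hd₂ hd₃
    have hneg₁ : deriv g c₁ < 0 := by
      rw [hd₁]; apply div_neg_of_neg_of_pos <;> simp [h0, hc₁.1, ha.1]
    have hzero₂ : deriv g c₂ = 0 := by rw [hd₂]; simp
    have hneg₃ : deriv g c₃ < 0 := by
      rw [hd₃]; apply div_neg_of_neg_of_pos
      · linarith
      · linarith [hc₃.1, hb.2, hc₃.2]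
    have h13 : c₁ < c₃ := by linarith [hc₁.2, hc₂.1, hc₂.2, hc₃.1]
    set μ : ℝ := (c₂ - c₁) / (c₃ - c₁) with hμdef
    set lam : ℝ := (c₃ - c₂) / (c₃ - c₁) with hlamdef
    have h31 : (0:ℝ) < c₃ - c₁ := by linarith
    have hμpos : 0 < μ := div_pos (by linarith [hc₁.2, hc₂.1]) h31
    have hlampos : 0 < lam := div_pos (by linarith [hc₂.2, hc₃.1]) h31
    have hsum : lam + μ = 1 := by
      rw [hlamdef, hμdef, ← add_div, div_eq_one_iff_eq (ne_of_gt h31)]; ring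
    have hcomb : lam • c₁ + μ • c₃ = c₂ := by
      have hne : c₃ - c₁ ≠ 0 := ne_of_gt h31
      rw [smul_eq_mul, smul_eq_mul, hμdef, hlamdef]
      field_simp
      ring
    have hc₁mem : c₁ ∈ Set.Icc (0:ℝ) 1 :=
      ⟨le_of_lt hc₁.1, by linarith [hc₁.2, ha.2]⟩
    have hc₃mem : c₃ ∈ Set.Icc (0:ℝ) 1 :=
      ⟨by linarith [hc₃.1, hb.1], le_of_lt hc₃.2⟩
    have := hconv.2 hc₁mem hc₃mem hlampos.le hμpos.le hsum
    rw [hcomb, hzero₂] at this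
    simp only [smul_eq_mul] at this
    nlinarith [mul_neg_of_pos_of_neg hlampos hneg₁, mul_neg_of_pos_of_neg hμpos hneg₃]
  refine ⟨β, ⟨hβmem, hβ0⟩, ?_⟩
  rintro y ⟨hy, hgy⟩
  rcases lt_trichotomy y β with h | h | h
  · exact absurd (key y β hy hβmem hgy hβ0 h) id
  · exact h
  · exact absurd (key β y hβmem hy hβ0 hgy h) id
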